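/- Suppose c > λ_max(Q_z). Then for every initialization x_0 ∈ X, the sequence (x_k) generated by the regularized Jacobi iteration converges to a point x* ∈ X that minimizes f over X. -/

import Mathlib

open Matrix Filter Topology
open scoped RealInnerProductSpace

noncomputable section

/-- The product decision space of `m` agents, agent `i` having an `n i`-dimensional
Euclidean decision vector; equipped with the (ℓ²-of-ℓ²) Euclidean norm. -/
abbrev JVec (m : ℕ) (n : Fin m → ℕ) :=
  PiLp 2 (fun i : Fin m => EuclideanSpace ℝ (Fin (n i)))

/-- `upd x i z` is the vector `(z, x^{-i})`: `x` with its `i`-th block replaced by `z`. -/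
def upd {m : ℕ} {n : Fin m → ℕ} (x : JVec m n) (i : Fin m)
    (z : EuclideanSpace ℝ (Fin (n i))) : JVec m n :=
  WithLp.toLp 2 (Function.update x.ofLp i z)
/-- The index set of the stacked vector `x = (x^1, …, x^m)`. -/
abbrev JIdx (m : ℕ) (n : Fin m → ℕ) := Σ i : Fin m, Fin (n i)

/-- Flatten a block vector into a plain vector indexed by `JIdx m n`. -/
def flat {m : ℕ} {n : Fin m → ℕ} (x : JVec m n) : JIdx m n → ℝ :=
  fun p => x p.1 p.2

/-- The block-diagonal part `Q_d` of `Q`: equal to `Q` on entries whose row and column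
indices lie in the same agent block, and zero elsewhere. -/
def blockDiagPart {m : ℕ} {n : Fin m → ℕ} (Q : Matrix (JIdx m n) (JIdx m n) ℝ) :
    Matrix (JIdx m n) (JIdx m n) ℝ :=
  Matrix.of fun p q => if p.1 = q.1 then Q p q else 0

/-- The quadratic objective `f(x) = xᵀ Q x + qᵀ x`. -/
def quadF {m : ℕ} {n : Fin m → ℕ} (Q : Matrix (JIdx m n) (JIdx m n) ℝ)
    (q : JIdx m n → ℝ) (x : JVec m n) : ℝ :=
  flat x ⬝ᵥ (Q *ᵥ flat x) + q ⬝ᵥ flat x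

/-- The largest eigenvalue of a real symmetric (Hermitian) matrix. -/
noncomputable def maxEig {ι : Type*} [Fintype ι] [DecidableEq ι]
    {A : Matrix ι ι ℝ} (hA : A.IsHermitian) : ℝ :=
  ⨆ p, hA.eigenvalues p


section Helpers
variable {ι : Type*} [Fintype ι]

lemma dot_symm (A : Matrix ι ι ℝ) (hA : Aᵀ = A) (u v : ι → ℝ) :
    u ⬝ᵥ (A *ᵥ v) = v ⬝ᵥ (A *ᵥ u) := by
  rw [Matrix.dotProduct_mulVec, ← Matrix.mulVec_transpose, hA, dotProduct_comm]

lemma dot_sum {κ : Type*} (v : ι → ℝ) (s : Finset κ) (f : κ → ι → ℝ) :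
    v ⬝ᵥ (∑ i ∈ s, f i) = ∑ i ∈ s, v ⬝ᵥ (f i) := by
  classical
  induction s using Finset.induction with
  | empty => simp
  | insert _ _ h ih => rw [Finset.sum_insert h, Finset.sum_insert h, dotProduct_add, ih]

lemma mulVec_sum' {κ : Type*} (A : Matrix ι ι ℝ) (s : Finset κ) (f : κ → ι → ℝ) :
    A *ᵥ (∑ i ∈ s, f i) = ∑ i ∈ s, A *ᵥ (f i) := by
  classical
  induction s using Finset.induction with
  | empty => simp
  | insert _ _ h ih => rw [Finset.sum_insert h, Finset.sum_insert h, Matrix.mulVec_add, ih]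

lemma quad_expand (A : Matrix ι ι ℝ) (hA : Aᵀ = A) (w d : ι → ℝ) (t : ℝ) :
    (w + t • d) ⬝ᵥ (A *ᵥ (w + t • d)) =
      w ⬝ᵥ (A *ᵥ w) + t * (2 * (w ⬝ᵥ (A *ᵥ d))) + t ^ 2 * (d ⬝ᵥ (A *ᵥ d)) := by
  have hsym := dot_symm A hA d w
  rw [Matrix.mulVec_add, Matrix.mulVec_smul, dotProduct_add, add_dotProduct,
    add_dotProduct, dotProduct_smul, smul_dotProduct,
    smul_dotProduct, dotProduct_smul]
  simp only [smul_eq_mul]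
  rw [hsym]; ring

lemma lin_expand (q w d : ι → ℝ) (t : ℝ) :
    q ⬝ᵥ (w + t • d) = q ⬝ᵥ w + t * (q ⬝ᵥ d) := by
  rw [dotProduct_add, dotProduct_smul]; simp

end Helpers

section Blocks
variable {m : ℕ} {n : Fin m → ℕ}

/-- restriction of a flat vector to block `i` (zero elsewhere) -/
def blk (i : Fin m) (u : JIdx m n → ℝ) : JIdx m n → ℝ :=
  fun p => if p.1 = i then u p else 0

lemma sum_blk (u : JIdx m n → ℝ) : ∑ i, blk i u = u := by
  funext p
  rw [Finset.sum_apply]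
  simp [blk]

lemma blk_quad (A : Matrix (JIdx m n) (JIdx m n) ℝ) (u : JIdx m n → ℝ) :
    ∑ i, (blk i u) ⬝ᵥ (A *ᵥ (blk i u)) = u ⬝ᵥ (blockDiagPart A *ᵥ u) := by
  simp only [Matrix.mulVec, dotProduct, blk, blockDiagPart, Matrix.of_apply]
  rw [Finset.sum_comm]
  refine Finset.sum_congr rfl fun p _ => ?_
  rw [Finset.sum_eq_single p.1]
  · rw [if_pos rfl]
    congr 1
    refine Finset.sum_congr rfl fun r _ => ?_
    by_cases h : r.1 = p.1
    · rw [if_pos h, if_pos h.symm]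
    · rw [if_neg h, if_neg (fun hh => h hh.symm), mul_zero, zero_mul]
  · intro i _ hne
    rw [if_neg (fun hh : p.1 = i => hne hh.symm), zero_mul]
  · intro h; exact absurd (Finset.mem_univ _) h

lemma blk_dot_self (i : Fin m) (u : JIdx m n → ℝ) :
    (blk i u) ⬝ᵥ (blk i u) = ∑ a : Fin (n i), (u ⟨i, a⟩) ^ 2 := by
  simp only [dotProduct, blk]
  rw [← Finset.univ_sigma_univ, Finset.sum_sigma]
  rw [Finset.sum_eq_single i]
  · simp [sq]
  · intro j _ hne; simp [hne]
  · intro h; exact absurd (Finset.mem_univ _) h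

lemma flat_upd (x y : JVec m n) (i : Fin m) :
    flat (upd x i (y i)) = flat x + blk i (flat y - flat x) := by
  funext p
  obtain ⟨j, a⟩ := p
  by_cases h : j = i
  · subst h
    simp [flat, upd, blk, Function.update_self]
  · simp [flat, upd, blk, Function.update_of_ne h, h]
end Blocks

lemma quadform_le_maxEig {ι : Type*} [Fintype ι] [DecidableEq ι] [Nonempty ι]
    {A : Matrix ι ι ℝ} (hA : A.IsHermitian) (v : ι → ℝ) :
    v ⬝ᵥ (A *ᵥ v) ≤ maxEig hA * (v ⬝ᵥ v) := by
  set U : Matrix ι ι ℝ := (hA.eigenvectorUnitary : Matrix ι ι ℝ) with hU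
  have hsU : star U = Uᵀ := by
    rw [Matrix.star_eq_conjTranspose, Matrix.conjTranspose_eq_transpose_of_trivial]
  set w : ι → ℝ := v ᵥ* U with hw
  have hUU : U * Uᵀ = 1 := by
    have := (Matrix.mem_unitaryGroup_iff).mp hA.eigenvectorUnitary.2
    rwa [hsU] at this
  have step1 : v ⬝ᵥ (A *ᵥ v) = ∑ p, hA.eigenvalues p * (w p)^2 := by
    conv_lhs => rw [hA.spectral_theorem, Unitary.conjStarAlgAut_apply]
    rw [hsU, ← Matrix.mulVec_mulVec, ← Matrix.mulVec_mulVec, Matrix.mulVec_transpose,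
      Matrix.dotProduct_mulVec]
    simp only [dotProduct, Matrix.mulVec_diagonal, hw, sq]
    exact Finset.sum_congr rfl (by intro p _; simp [hU]; ring)
  have step2 : v ⬝ᵥ v = ∑ p, (w p)^2 := by
    have : (∑ p, (w p)^2) = w ⬝ᵥ w := by simp [dotProduct, sq]
    rw [this, hw, ← Matrix.dotProduct_mulVec, ← Matrix.mulVec_transpose U v,
      Matrix.mulVec_mulVec, hUU, Matrix.one_mulVec]
  rw [step1, step2, Finset.mul_sum]
  apply Finset.sum_le_sum
  intro p _
  exact mul_le_mul_of_nonneg_right (le_ciSup (Set.Finite.bddAbove (Set.finite_range _)) p) (sq_nonneg _)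


section Key
variable {m : ℕ} {n : Fin m → ℕ}

lemma quad_expand1 {ι : Type*} [Fintype ι] (A : Matrix ι ι ℝ) (hA : Aᵀ = A) (w d : ι → ℝ) :
    (w + d) ⬝ᵥ (A *ᵥ (w + d)) =
      w ⬝ᵥ (A *ᵥ w) + 2 * (w ⬝ᵥ (A *ᵥ d)) + d ⬝ᵥ (A *ᵥ d) := by
  have := quad_expand A hA w d 1
  simpa using this

lemma sum_blk_dot (u : JIdx m n → ℝ) : ∑ i, (blk i u) ⬝ᵥ (blk i u) = u ⬝ᵥ u := by
  simp only [blk_dot_self]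
  rw [show (u ⬝ᵥ u) = ∑ p, u p ^ 2 by simp [dotProduct, sq]]
  rw [← Finset.univ_sigma_univ, Finset.sum_sigma]

lemma key_identity (Q : Matrix (JIdx m n) (JIdx m n) ℝ) (hQs : Qᵀ = Q) (q : JIdx m n → ℝ)
    (c : ℝ) (x y : JVec m n) :
    ∑ i, (quadF Q q (upd x i (y i)) + c * ‖y i - x i‖ ^ 2)
      = (m : ℝ) * quadF Q q x - quadF Q q x + quadF Q q y
        + (c * ((flat y - flat x) ⬝ᵥ (flat y - flat x))
           - (flat y - flat x) ⬝ᵥ ((Q - blockDiagPart Q) *ᵥ (flat y - flat x))) := by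
  set v : JIdx m n → ℝ := flat x with hv
  set u : JIdx m n → ℝ := flat y - flat x with hu
  have hflaty : flat y = v + u := by rw [hv, hu]; ring
  have hnormsq : ∀ i, ‖y i - x i‖ ^ 2 = (blk i u) ⬝ᵥ (blk i u) := by
    intro i
    rw [blk_dot_self, EuclideanSpace.norm_eq, Real.sq_sqrt (by positivity)]
    refine Finset.sum_congr rfl fun a _ => ?_
    have : (y i - x i) a = u ⟨i, a⟩ := rfl
    rw [this, Real.norm_eq_abs, sq_abs]
  have expand_i : ∀ i, quadF Q q (upd x i (y i)) + c * ‖y i - x i‖ ^ 2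
      = (v ⬝ᵥ (Q *ᵥ v) + q ⬝ᵥ v)
        + (2 * (v ⬝ᵥ (Q *ᵥ blk i u)) + q ⬝ᵥ (blk i u) + (blk i u) ⬝ᵥ (Q *ᵥ (blk i u))
           + c * ((blk i u) ⬝ᵥ (blk i u))) := by
    intro i
    have hq : quadF Q q (upd x i (y i))
        = flat (upd x i (y i)) ⬝ᵥ (Q *ᵥ flat (upd x i (y i))) + q ⬝ᵥ flat (upd x i (y i)) := rfl
    rw [hq, flat_upd x y i, hnormsq i, quad_expand1 Q hQs, dotProduct_add]
    rw [hv]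
    ring
  rw [Finset.sum_congr rfl (fun i _ => expand_i i)]
  simp only [Finset.sum_add_distrib]
  have h1 : ∑ i, 2 * (v ⬝ᵥ (Q *ᵥ blk i u)) = 2 * (v ⬝ᵥ (Q *ᵥ u)) := by
    rw [← Finset.mul_sum]
    congr 1
    conv_rhs => rw [← sum_blk u]
    rw [mulVec_sum', dot_sum]
  have h2 : ∑ i, q ⬝ᵥ (blk i u) = q ⬝ᵥ u := by
    conv_rhs => rw [← sum_blk u]
    rw [dot_sum]
  have h3 := blk_quad Q u
  have h4 := sum_blk_dot u
  have h6 : ∑ i, c * ((blk i u) ⬝ᵥ (blk i u)) = c * (u ⬝ᵥ u) := by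
    rw [← Finset.mul_sum, h4]
  rw [h1, h2, h3, h6, Finset.sum_const, Finset.sum_const, Finset.card_univ, Fintype.card_fin]
  have hqx : quadF Q q x = v ⬝ᵥ (Q *ᵥ v) + q ⬝ᵥ v := rfl
  have hqy : quadF Q q y = v ⬝ᵥ (Q *ᵥ v) + 2 * (v ⬝ᵥ (Q *ᵥ u)) + u ⬝ᵥ (Q *ᵥ u)
      + (q ⬝ᵥ v + q ⬝ᵥ u) := by
    have : quadF Q q y = flat y ⬝ᵥ (Q *ᵥ flat y) + q ⬝ᵥ flat y := rfl
    rw [this, hflaty, quad_expand1 Q hQs, dotProduct_add]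
  have hsub : u ⬝ᵥ ((Q - blockDiagPart Q) *ᵥ u) = u ⬝ᵥ (Q *ᵥ u) - u ⬝ᵥ (blockDiagPart Q *ᵥ u) := by
    rw [Matrix.sub_mulVec, dotProduct_sub]
  rw [hqx, hqy, hsub]
  simp only [nsmul_eq_mul]
  ring
end Key


section Part2
variable {m : ℕ} {n : Fin m → ℕ}

/-- the bilinear form associated with `c•I - Q_z` -/
def Bf (Q : Matrix (JIdx m n) (JIdx m n) ℝ) (c : ℝ) (u w : JIdx m n → ℝ) : ℝ :=
  c * (u ⬝ᵥ w) - u ⬝ᵥ ((Q - blockDiagPart Q) *ᵥ w)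

/-- the flat quadratic objective -/
def Fq {ι : Type*} [Fintype ι] (Q : Matrix ι ι ℝ) (q : ι → ℝ) (w : ι → ℝ) : ℝ :=
  w ⬝ᵥ (Q *ᵥ w) + q ⬝ᵥ w

lemma Bf_neg (Q : Matrix (JIdx m n) (JIdx m n) ℝ) (c : ℝ) (u : JIdx m n → ℝ) :
    Bf Q c (-u) (-u) = Bf Q c u u := by
  simp [Bf, neg_dotProduct, dotProduct_neg, Matrix.mulVec_neg]

lemma dot_self_expand {ι : Type*} [Fintype ι] [DecidableEq ι] (a b : ι → ℝ) (t : ℝ) :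
    (a + t • b) ⬝ᵥ (a + t • b) = a ⬝ᵥ a + t * (2 * (a ⬝ᵥ b)) + t ^ 2 * (b ⬝ᵥ b) := by
  have h := quad_expand (1 : Matrix ι ι ℝ) (Matrix.transpose_one) a b t
  simpa [Matrix.one_mulVec] using h

lemma star_lemma (Q : Matrix (JIdx m n) (JIdx m n) ℝ) (hQs : Qᵀ = Q) (q : JIdx m n → ℝ)
    (c : ℝ) (xk y z : JVec m n)
    (hsum : ∑ i, (quadF Q q (upd xk i (y i)) + c * ‖y i - xk i‖ ^ 2)
      ≤ ∑ i, (quadF Q q (upd xk i (z i)) + c * ‖z i - xk i‖ ^ 2)) :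
    Fq Q q (flat y) + Bf Q c (flat y - flat xk) (flat y - flat xk)
      ≤ Fq Q q (flat z) + Bf Q c (flat z - flat xk) (flat z - flat xk) := by
  rw [key_identity Q hQs q c xk y, key_identity Q hQs q c xk z] at hsum
  simp only [quadF, Fq, Bf] at *
  linarith

lemma flat_affine (a b : JVec m n) (t : ℝ) :
    flat (a + t • (b - a)) = flat a + t • (flat b - flat a) := rfl

lemma key_lemma (Q : Matrix (JIdx m n) (JIdx m n) ℝ) (hQs : Qᵀ = Q)
    (hMzs : (Q - blockDiagPart Q)ᵀ = Q - blockDiagPart Q)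
    (hQpsd : ∀ u : JIdx m n → ℝ, 0 ≤ u ⬝ᵥ (Q *ᵥ u))
    (q : JIdx m n → ℝ) (c : ℝ)
    (hBnn : ∀ u, 0 ≤ Bf Q c u u)
    (X : ∀ i : Fin m, Set (EuclideanSpace ℝ (Fin (n i))))
    (hXcvx : ∀ i, Convex ℝ (X i))
    (xk xk1 : JVec m n) (hxk1 : ∀ i, xk1 i ∈ X i)
    (hmin : ∀ z : JVec m n, (∀ i, z i ∈ X i) →
      Fq Q q (flat xk1) + Bf Q c (flat xk1 - flat xk) (flat xk1 - flat xk)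
        ≤ Fq Q q (flat z) + Bf Q c (flat z - flat xk) (flat z - flat xk))
    (z : JVec m n) (hz : ∀ i, z i ∈ X i) :
    Fq Q q (flat xk1) + Bf Q c (flat xk1 - flat xk) (flat xk1 - flat xk)
        + Bf Q c (flat z - flat xk1) (flat z - flat xk1)
      ≤ Fq Q q (flat z) + Bf Q c (flat z - flat xk) (flat z - flat xk) := by
  classical
  set Mz := Q - blockDiagPart Q with hMz
  set w : JIdx m n → ℝ := flat xk1 with hw
  set vk : JIdx m n → ℝ := flat xk with hvk
  set s : JIdx m n → ℝ := flat z with hs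
  set d : JIdx m n → ℝ := s - w with hd
  set L : ℝ := 2 * (w ⬝ᵥ (Q *ᵥ d)) + q ⬝ᵥ d
      + (2 * (c * ((w - vk) ⬝ᵥ d) - (w - vk) ⬝ᵥ (Mz *ᵥ d))) with hL
  set R : ℝ := d ⬝ᵥ (Q *ᵥ d) + Bf Q c d d with hR
  have hexp : ∀ t : ℝ,
      Fq Q q (w + t • d) + Bf Q c (w + t • d - vk) (w + t • d - vk)
        = Fq Q q w + Bf Q c (w - vk) (w - vk) + t * L + t ^ 2 * R := by
    intro t
    have h1 : w + t • d - vk = (w - vk) + t • d := by abel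
    rw [h1]
    simp only [Fq, Bf, hL, hR, ← hMz]
    rw [quad_expand Q hQs, quad_expand Mz hMzs, dot_self_expand, lin_expand]
    ring
  have hRnn : 0 ≤ R := add_nonneg (hQpsd d) (hBnn d)
  have hineq : ∀ t : ℝ, 0 < t → t ≤ 1 → 0 ≤ t * L + t ^ 2 * R := by
    intro t ht0 ht1
    have hzt : ∀ i, (xk1 + t • (z - xk1)) i ∈ X i := by
      intro i
      have hrepr : (xk1 + t • (z - xk1)) i = (1 - t) • xk1 i + t • z i := by
        show xk1 i + t • (z i - xk1 i) = (1 - t) • xk1 i + t • z i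
        module
      rw [hrepr]
      exact hXcvx i (hxk1 i) (hz i) (by linarith) ht0.le (by ring)
    have h := hmin (xk1 + t • (z - xk1)) hzt
    rw [flat_affine] at h
    rw [hexp t] at h
    linarith
  have hLnn : 0 ≤ L := by
    by_contra hneg
    push_neg at hneg
    set t : ℝ := min 1 (-L / (2 * R + 1)) with ht
    have hRpos : (0:ℝ) < 2 * R + 1 := by linarith
    have ht0 : 0 < t := lt_min one_pos (div_pos (neg_pos.2 hneg) hRpos)
    have ht1 : t ≤ 1 := min_le_left _ _
    have ht2 : t * (2 * R + 1) ≤ -L := by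
      have := min_le_right (1:ℝ) (-L / (2 * R + 1))
      calc t * (2 * R + 1) ≤ (-L / (2 * R + 1)) * (2 * R + 1) :=
            mul_le_mul_of_nonneg_right this hRpos.le
        _ = -L := by field_simp
    have h := hineq t ht0 ht1
    have h2 : 0 ≤ L + t * R := by
      have hfac : t * L + t ^ 2 * R = t * (L + t * R) := by ring
      rw [hfac] at h
      exact nonneg_of_mul_nonneg_right h ht0
    nlinarith [mul_pos ht0 (by linarith : (0:ℝ) < R + 1)]
  have h1 := hexp 1
  have hwd : w + (1:ℝ) • d = s := by rw [hd]; module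
  rw [hwd] at h1
  have hRB : Bf Q c d d ≤ R := by
    have := hQpsd d
    rw [hR]; linarith
  linarith [h1, hLnn, hRB]
end Part2


section Part3
variable {m : ℕ} {n : Fin m → ℕ}

lemma contFq {ι : Type*} [Fintype ι] (Q : Matrix ι ι ℝ) (q : ι → ℝ) :
    Continuous (Fq Q q) := by
  unfold Fq
  simp only [dotProduct, Matrix.mulVec]
  refine Continuous.add (continuous_finset_sum _ fun p _ => ?_)
    (continuous_finset_sum _ fun p _ => continuous_const.mul (continuous_apply p))
  exact (continuous_apply p).mul
    (continuous_finset_sum _ fun r _ => continuous_const.mul (continuous_apply r))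

lemma contBf (Q : Matrix (JIdx m n) (JIdx m n) ℝ) (c : ℝ) :
    Continuous fun u : JIdx m n → ℝ => Bf Q c u u := by
  unfold Bf
  simp only [dotProduct, Matrix.mulVec]
  refine Continuous.sub (continuous_const.mul (continuous_finset_sum _ fun p _ =>
    (continuous_apply p).mul (continuous_apply p))) ?_
  exact continuous_finset_sum _ fun p _ => (continuous_apply p).mul
    (continuous_finset_sum _ fun r _ => continuous_const.mul (continuous_apply r))

lemma cont_flat : Continuous fun y : JVec m n => flat y := by
  apply continuous_pi
  intro p
  have h1 : Continuous fun y : JVec m n => (y p.1 : EuclideanSpace ℝ (Fin (n p.1))) :=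
    (continuous_apply p.1).comp (PiLp.continuous_ofLp _ _)
  exact ((continuous_apply p.2).comp (PiLp.continuous_ofLp _ _)).comp h1

lemma norm_sq_flat (y : JVec m n) : ‖y‖ ^ 2 = flat y ⬝ᵥ flat y := by
  rw [PiLp.norm_sq_eq_of_L2]
  rw [show (flat y ⬝ᵥ flat y) = ∑ p, flat y p ^ 2 by simp [dotProduct, sq]]
  rw [← Finset.univ_sigma_univ, Finset.sum_sigma]
  refine Finset.sum_congr rfl fun i _ => ?_
  rw [EuclideanSpace.norm_eq, Real.sq_sqrt (by positivity)]
  refine Finset.sum_congr rfl fun a _ => ?_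
  rw [Real.norm_eq_abs, sq_abs]
  rfl

lemma tendsto_of_sq_tendsto {u : ℕ → ℝ} (h : Tendsto (fun k => u k ^ 2) atTop (𝓝 0)) :
    Tendsto u atTop (𝓝 0) := by
  have habs : Tendsto (fun k => |u k|) atTop (𝓝 0) := by
    have hs : Tendsto (fun k => Real.sqrt (u k ^ 2)) atTop (𝓝 (Real.sqrt 0)) :=
      (Real.continuous_sqrt.tendsto 0).comp h
    simpa [Real.sqrt_sq_eq_abs, Real.sqrt_zero] using hs
  exact tendsto_zero_iff_abs_tendsto_zero u |>.mpr habs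
end Part3

/-- Theorem 1: for the quadratic objective `f(x) = xᵀQx + qᵀx` with `Q ⪰ 0` symmetric,
if `c > λ_max(Q_z)` (with `Q_z = Q − Q_d`), then from any initialization `x₀ ∈ X` the
regularized Jacobi iterates converge to a point `x* ∈ X` minimizing `f` over `X`. -/
theorem stmt_0 {m : ℕ} {n : Fin m → ℕ} [Nonempty (JIdx m n)]
    (X : ∀ i : Fin m, Set (EuclideanSpace ℝ (Fin (n i))))
    (hXne : ∀ i, (X i).Nonempty)
    (hXcpt : ∀ i, IsCompact (X i))
    (hXcvx : ∀ i, Convex ℝ (X i))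
    (Q : Matrix (JIdx m n) (JIdx m n) ℝ) (hQ : Q.PosSemidef)
    (q : JIdx m n → ℝ)
    (hQz : (Q - blockDiagPart Q).IsHermitian)
    (c : ℝ) (hc : maxEig hQz < c)
    (x : ℕ → JVec m n) (hx0 : ∀ i, x 0 i ∈ X i)
    (hrec : ∀ k : ℕ, ∀ i : Fin m, x (k + 1) i ∈ X i ∧
      ∀ z ∈ X i,
        quadF Q q (upd (x k) i (x (k + 1) i)) + c * ‖x (k + 1) i - x k i‖ ^ 2 ≤
          quadF Q q (upd (x k) i z) + c * ‖z - x k i‖ ^ 2) :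
    ∃ xs : JVec m n, (∀ i, xs i ∈ X i) ∧
      (∀ y : JVec m n, (∀ i, y i ∈ X i) → quadF Q q xs ≤ quadF Q q y) ∧
      Tendsto x atTop (𝓝 xs) := by
  classical
  have hQs : Qᵀ = Q := by
    have h := hQ.1
    rwa [Matrix.IsHermitian, Matrix.conjTranspose_eq_transpose_of_trivial] at h
  have hMzs : (Q - blockDiagPart Q)ᵀ = Q - blockDiagPart Q := by
    have h := hQz
    rwa [Matrix.IsHermitian, Matrix.conjTranspose_eq_transpose_of_trivial] at h
  have hQpsd : ∀ u : JIdx m n → ℝ, 0 ≤ u ⬝ᵥ (Q *ᵥ u) := by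
    intro u
    have h := hQ.dotProduct_mulVec_nonneg u
    simpa using h
  have hαpos : 0 < c - maxEig hQz := by linarith
  have hdotnn : ∀ u : JIdx m n → ℝ, 0 ≤ u ⬝ᵥ u :=
    fun u => Finset.sum_nonneg fun p _ => mul_self_nonneg _
  have hBlow : ∀ u : JIdx m n → ℝ, (c - maxEig hQz) * (u ⬝ᵥ u) ≤ Bf Q c u u := by
    intro u
    have h := quadform_le_maxEig hQz u
    simp only [Bf]
    nlinarith
  have hBnn : ∀ u, 0 ≤ Bf Q c u u :=
    fun u => le_trans (mul_nonneg hαpos.le (hdotnn u)) (hBlow u)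
  -- the feasible set
  set S : Set (JVec m n) := {y : JVec m n | ∀ i, y i ∈ X i} with hSdef
  have hScpt : IsCompact S := by
    have hK : IsCompact (Set.univ.pi X) := isCompact_univ_pi hXcpt
    have himg : S = (WithLp.equiv 2 (∀ i, EuclideanSpace ℝ (Fin (n i)))).symm '' (Set.univ.pi X) := by
      ext y
      constructor
      · intro hy
        exact ⟨(WithLp.equiv 2 _) y, fun i _ => hy i, rfl⟩
      · rintro ⟨w, hw, rfl⟩ i
        exact hw i (Set.mem_univ i)
    rw [himg]
    exact hK.image (PiLp.continuous_toLp _ _)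
  have hSne : S.Nonempty := ⟨WithLp.toLp 2 (fun i => (hXne i).some), fun i => (hXne i).some_mem⟩
  have hxmem : ∀ k, x k ∈ S := by
    intro k
    induction k with
    | zero => exact hx0
    | succ k ih => exact fun i => (hrec k i).1
  -- star inequality
  have hstar : ∀ k, ∀ z : JVec m n, (∀ i, z i ∈ X i) →
      Fq Q q (flat (x (k+1))) + Bf Q c (flat (x (k+1)) - flat (x k)) (flat (x (k+1)) - flat (x k))
        ≤ Fq Q q (flat z) + Bf Q c (flat z - flat (x k)) (flat z - flat (x k)) := by
    intro k z hz
    exact star_lemma Q hQs q c (x k) (x (k+1)) z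
      (Finset.sum_le_sum fun i _ => (hrec k i).2 (z i) (hz i))
  have hKEY : ∀ k, ∀ z : JVec m n, (∀ i, z i ∈ X i) →
      Fq Q q (flat (x (k+1))) + Bf Q c (flat (x (k+1)) - flat (x k)) (flat (x (k+1)) - flat (x k))
          + Bf Q c (flat z - flat (x (k+1))) (flat z - flat (x (k+1)))
        ≤ Fq Q q (flat z) + Bf Q c (flat z - flat (x k)) (flat z - flat (x k)) := by
    intro k z hz
    exact key_lemma Q hQs hMzs hQpsd q c hBnn X hXcvx (x k) (x (k+1))
      (fun i => (hrec k i).1) (fun z' hz' => hstar k z' hz') z hz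
  -- monotonicity of the objective values
  have hmono : ∀ k, Fq Q q (flat (x (k+1)))
      + 2 * Bf Q c (flat (x (k+1)) - flat (x k)) (flat (x (k+1)) - flat (x k))
      ≤ Fq Q q (flat (x k)) := by
    intro k
    have h := hKEY k (x k) (hxmem k)
    have h0 : Bf Q c (flat (x k) - flat (x k)) (flat (x k) - flat (x k)) = 0 := by
      simp [Bf]
    have hneg : Bf Q c (flat (x k) - flat (x (k+1))) (flat (x k) - flat (x (k+1)))
        = Bf Q c (flat (x (k+1)) - flat (x k)) (flat (x (k+1)) - flat (x k)) := by
      have hh : flat (x k) - flat (x (k+1)) = -(flat (x (k+1)) - flat (x k)) := by abel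
      rw [hh, Bf_neg]
    rw [h0, hneg] at h
    linarith
  have heanti : Antitone fun k => Fq Q q (flat (x k)) :=
    antitone_nat_of_succ_le fun k => by
      have h1 := hmono k
      have h2 := hBnn (flat (x (k+1)) - flat (x k))
      linarith
  obtain ⟨y₀, hy₀S, hy₀min⟩ := hScpt.exists_isMinOn hSne
    ((contFq Q q).comp cont_flat).continuousOn
  have hebd : BddBelow (Set.range fun k => Fq Q q (flat (x k))) := by
    refine ⟨Fq Q q (flat y₀), ?_⟩
    rintro r ⟨k, rfl⟩
    exact hy₀min (hxmem k)
  set ℓ : ℝ := ⨅ k, Fq Q q (flat (x k)) with hℓ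
  have h_e_lim : Tendsto (fun k => Fq Q q (flat (x k))) atTop (𝓝 ℓ) :=
    tendsto_atTop_ciInf heanti hebd
  have hℓ_le : ∀ k, ℓ ≤ Fq Q q (flat (x k)) := fun k => ciInf_le hebd k
  have hediff : Tendsto (fun k => Fq Q q (flat (x k)) - Fq Q q (flat (x (k+1)))) atTop (𝓝 0) := by
    have h2 : Tendsto (fun k => Fq Q q (flat (x (k+1)))) atTop (𝓝 ℓ) :=
      h_e_lim.comp (tendsto_add_atTop_nat 1)
    simpa using h_e_lim.sub h2
  have hBδ0 : Tendsto (fun k => Bf Q c (flat (x (k+1)) - flat (x k)) (flat (x (k+1)) - flat (x k)))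
      atTop (𝓝 0) := by
    refine squeeze_zero (fun k => hBnn _) (fun k => ?_) (by simpa using hediff.div_const 2)
    have := hmono k
    linarith
  have hδdot0 : Tendsto (fun k => (flat (x (k+1)) - flat (x k)) ⬝ᵥ (flat (x (k+1)) - flat (x k)))
      atTop (𝓝 0) := by
    refine squeeze_zero (fun k => hdotnn _) (fun k => ?_)
      (by simpa using hBδ0.div_const (c - maxEig hQz))
    rw [le_div_iff₀ hαpos]
    have := hBlow (flat (x (k+1)) - flat (x k))
    linarith
  have hδ0 : Tendsto (fun k => flat (x (k+1)) - flat (x k)) atTop (𝓝 0) := by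
    rw [tendsto_pi_nhds]
    intro p
    have hsq : Tendsto (fun k => ((flat (x (k+1)) - flat (x k)) p) ^ 2) atTop (𝓝 0) := by
      refine squeeze_zero (fun k => sq_nonneg _) (fun k => ?_) hδdot0
      rw [sq]
      exact Finset.single_le_sum (f := fun r => (flat (x (k+1)) - flat (x k)) r
        * (flat (x (k+1)) - flat (x k)) r) (fun r _ => mul_self_nonneg _) (Finset.mem_univ p)
    simpa using tendsto_of_sq_tendsto hsq
  -- cluster point
  obtain ⟨xs, hxsS, φ, hφmono, hφconv⟩ := hScpt.tendsto_subseq hxmem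
  have hφtop : Tendsto φ atTop atTop := hφmono.tendsto_atTop
  have hvφ : Tendsto (fun j => flat (x (φ j))) atTop (𝓝 (flat xs)) :=
    (cont_flat.tendsto xs).comp hφconv
  have heφ : Tendsto (fun j => Fq Q q (flat (x (φ j)))) atTop (𝓝 ℓ) := h_e_lim.comp hφtop
  have hFxs : Fq Q q (flat xs) = ℓ :=
    tendsto_nhds_unique (((contFq Q q).tendsto _).comp hvφ) heφ
  have hvφ1 : Tendsto (fun j => flat (x (φ j + 1))) atTop (𝓝 (flat xs)) := by
    have hfe : (fun j => flat (x (φ j + 1)))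
        = fun j => flat (x (φ j)) + (flat (x (φ j + 1)) - flat (x (φ j))) := by
      funext j; abel
    rw [hfe]
    have hδφ : Tendsto (fun j => flat (x (φ j + 1)) - flat (x (φ j))) atTop (𝓝 0) :=
      hδ0.comp hφtop
    simpa using hvφ.add hδφ
  have hφ1top : Tendsto (fun j => φ j + 1) atTop atTop :=
    (tendsto_add_atTop_nat 1).comp hφtop
  -- minimality of the cluster point
  have hmin : ∀ z : JVec m n, (∀ i, z i ∈ X i) → ℓ ≤ Fq Q q (flat z) := by
    intro z hz
    have hBzc : Continuous fun u : JIdx m n → ℝ =>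
        Bf Q c (flat z - u) (flat z - u) :=
      (contBf Q c).comp (continuous_const.sub continuous_id)
    have hLlim : Tendsto (fun j => Fq Q q (flat (x (φ j + 1)))
        + Bf Q c (flat (x (φ j + 1)) - flat (x (φ j))) (flat (x (φ j + 1)) - flat (x (φ j)))
        + Bf Q c (flat z - flat (x (φ j + 1))) (flat z - flat (x (φ j + 1))))
        atTop (𝓝 (ℓ + 0 + Bf Q c (flat z - flat xs) (flat z - flat xs))) := by
      refine Tendsto.add (Tendsto.add ?_ ?_) ?_
      · exact h_e_lim.comp hφ1top
      · exact hBδ0.comp hφtop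
      · exact (hBzc.tendsto _).comp hvφ1
    have hRlim : Tendsto (fun j => Fq Q q (flat z)
        + Bf Q c (flat z - flat (x (φ j))) (flat z - flat (x (φ j))))
        atTop (𝓝 (Fq Q q (flat z) + Bf Q c (flat z - flat xs) (flat z - flat xs))) :=
      tendsto_const_nhds.add ((hBzc.tendsto _).comp hvφ)
    have hle := le_of_tendsto_of_tendsto' hLlim hRlim (fun j => hKEY (φ j) z hz)
    linarith
  -- Fejér-type monotone distance
  have hdanti : ∀ k, Bf Q c (flat xs - flat (x (k+1))) (flat xs - flat (x (k+1)))
      ≤ Bf Q c (flat xs - flat (x k)) (flat xs - flat (x k)) := by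
    intro k
    have h := hKEY k xs hxsS
    rw [hFxs] at h
    have h1 := hℓ_le (k+1)
    have h2 := hBnn (flat (x (k+1)) - flat (x k))
    linarith
  have hdbd : BddBelow (Set.range fun k => Bf Q c (flat xs - flat (x k)) (flat xs - flat (x k))) :=
    ⟨0, by rintro r ⟨k, rfl⟩; exact hBnn _⟩
  have hdlim : Tendsto (fun k => Bf Q c (flat xs - flat (x k)) (flat xs - flat (x k)))
      atTop (𝓝 (⨅ k, Bf Q c (flat xs - flat (x k)) (flat xs - flat (x k)))) :=
    tendsto_atTop_ciInf (antitone_nat_of_succ_le hdanti) hdbd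
  have hBxsc : Continuous fun u : JIdx m n → ℝ => Bf Q c (flat xs - u) (flat xs - u) :=
    (contBf Q c).comp (continuous_const.sub continuous_id)
  have hdφ0 : Tendsto (fun j => Bf Q c (flat xs - flat (x (φ j))) (flat xs - flat (x (φ j))))
      atTop (𝓝 0) := by
    have h := (hBxsc.tendsto (flat xs)).comp hvφ
    simpa [Bf, Function.comp_def] using h
  have hinf0 : (⨅ k, Bf Q c (flat xs - flat (x k)) (flat xs - flat (x k))) = 0 :=
    tendsto_nhds_unique (hdlim.comp hφtop) hdφ0
  have hd0 : Tendsto (fun k => Bf Q c (flat xs - flat (x k)) (flat xs - flat (x k)))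
      atTop (𝓝 0) := by
    rw [← hinf0]
    exact hdlim
  -- convergence in norm
  have hdot0 : Tendsto (fun k => (flat xs - flat (x k)) ⬝ᵥ (flat xs - flat (x k)))
      atTop (𝓝 0) := by
    refine squeeze_zero (fun k => hdotnn _) (fun k => ?_)
      (by simpa using hd0.div_const (c - maxEig hQz))
    rw [le_div_iff₀ hαpos]
    have := hBlow (flat xs - flat (x k))
    linarith
  have hnormsq : ∀ k, ‖x k - xs‖ ^ 2 = (flat xs - flat (x k)) ⬝ᵥ (flat xs - flat (x k)) := by
    intro k
    rw [norm_sq_flat]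
    have hh : flat (x k - xs) = -(flat xs - flat (x k)) := by
      funext p
      show (x k - xs) p.1 p.2 = -((xs p.1 p.2) - (x k p.1 p.2))
      show x k p.1 p.2 - xs p.1 p.2 = _
      ring
    rw [hh]
    rw [neg_dotProduct, dotProduct_neg, neg_neg]
  have hxconv : Tendsto x atTop (𝓝 xs) := by
    rw [tendsto_iff_norm_sub_tendsto_zero]
    have hsq : Tendsto (fun k => ‖x k - xs‖ ^ 2) atTop (𝓝 0) := by
      simpa [hnormsq] using hdot0
    have h := tendsto_of_sq_tendsto hsq
    exact h
  refine ⟨xs, hxsS, ?_, hxconv⟩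
  intro y hy
  have h1 : quadF Q q xs = Fq Q q (flat xs) := rfl
  have h2 : quadF Q q y = Fq Q q (flat y) := rfl
  rw [h1, h2, hFxs]
  exact hmin y hy
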